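/- Let n ≥ 1, λ ≥ 0, μ > 0 and C > 0 be real numbers, and define A σ = (1/(2μ))(σ − (λ/(nλ+2μ)) tr(σ) I) and dev σ = σ − (1/n) tr(σ) I for real n×n matrices σ. Then every real n×n matrix σ satisfying |tr σ| ≤ C ‖dev σ‖_F fulfills ⟨A σ, σ⟩ ≥ min{1/(8μ), 1/(8C²μ)} · ‖σ‖_F², where ⟨X,Y⟩ = tr(Xᵀ Y) is the Frobenius inner product and ‖·‖_F the Frobenius norm. -/

import Mathlib

open Matrix

/-- The Frobenius inner product `⟨X, Y⟩ = tr(Xᵀ Y)` on real `n×n` matrices. -/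
noncomputable def frobInner {n : ℕ} (X Y : Matrix (Fin n) (Fin n) ℝ) : ℝ :=
  Matrix.trace (Xᵀ * Y)

/-- The Frobenius norm on real `n×n` matrices. -/
noncomputable def frobNorm {n : ℕ} (X : Matrix (Fin n) (Fin n) ℝ) : ℝ :=
  Real.sqrt (frobInner X X)

/-- The compliance tensor of a homogeneous isotropic material with Lamé coefficients
`λ ≥ 0`, `μ > 0`: `A σ = (1/(2μ))(σ − (λ/(nλ+2μ)) tr(σ) I)`. -/
noncomputable def complianceA {n : ℕ} (lam mu : ℝ) (σ : Matrix (Fin n) (Fin n) ℝ) :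
    Matrix (Fin n) (Fin n) ℝ :=
  (1 / (2 * mu)) •
    (σ - (lam / ((n : ℝ) * lam + 2 * mu)) • Matrix.trace σ • (1 : Matrix (Fin n) (Fin n) ℝ))

/-- The deviatoric (trace-free) part `dev σ = σ − (1/n) tr(σ) I`. -/
noncomputable def devPart {n : ℕ} (σ : Matrix (Fin n) (Fin n) ℝ) :
    Matrix (Fin n) (Fin n) ℝ :=
  σ - (1 / (n : ℝ)) • Matrix.trace σ • (1 : Matrix (Fin n) (Fin n) ℝ)

lemma frobInner_self_nonneg {n : ℕ} (X : Matrix (Fin n) (Fin n) ℝ) : 0 ≤ frobInner X X := by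
  unfold frobInner
  rw [Matrix.trace]
  refine Finset.sum_nonneg fun i _ => ?_
  simp only [Matrix.diag_apply, Matrix.mul_apply, Matrix.transpose_apply]
  exact Finset.sum_nonneg fun j _ => mul_self_nonneg _

lemma sq_frobNorm {n : ℕ} (X : Matrix (Fin n) (Fin n) ℝ) :
    frobNorm X ^ 2 = frobInner X X := Real.sq_sqrt (frobInner_self_nonneg X)

/-- Coercivity with constant independent of `λ`: if `|tr σ| ≤ C ‖dev σ‖_F`, then
`⟨A σ, σ⟩ ≥ min{1/(8μ), 1/(8C²μ)} ‖σ‖_F²`. -/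
theorem complianceA_coercive_of_trace_control (n : ℕ) (hn : 1 ≤ n)
    (lam mu C : ℝ) (hlam : 0 ≤ lam) (hmu : 0 < mu) (hC : 0 < C)
    (σ : Matrix (Fin n) (Fin n) ℝ)
    (htr : |Matrix.trace σ| ≤ C * frobNorm (devPart σ)) :
    min (1 / (8 * mu)) (1 / (8 * C ^ 2 * mu)) * frobNorm σ ^ 2 ≤
      frobInner (complianceA lam mu σ) σ := by
  have hn0 : (0:ℝ) < n := by exact_mod_cast hn
  set t := Matrix.trace σ with ht
  set S := frobInner σ σ with hS
  set D := frobInner (devPart σ) (devPart σ) with hD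
  have hden : 0 < (n : ℝ) * lam + 2 * mu := by positivity
  have hDeq : D = S - t ^ 2 / n := by
    rw [hD, hS, ht]
    unfold frobInner devPart
    simp only [Matrix.sub_mul, Matrix.mul_sub, Matrix.smul_mul, Matrix.mul_smul,
      transpose_sub, transpose_smul, transpose_one, trace_sub, trace_smul, trace_one,
      trace_transpose, Matrix.one_mul, Matrix.mul_one, smul_eq_mul, Fintype.card_fin]
    field_simp
    ring
  have hDnn : 0 ≤ D := frobInner_self_nonneg _
  have hAeq : frobInner (complianceA lam mu σ) σ
      = (1 / (2 * mu)) * (S - lam / ((n : ℝ) * lam + 2 * mu) * t ^ 2) := by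
    rw [hS, ht]
    unfold frobInner complianceA
    simp only [Matrix.sub_mul, Matrix.smul_mul, transpose_sub, transpose_smul,
      transpose_one, trace_sub, trace_smul, trace_one, trace_transpose,
      Matrix.one_mul, smul_eq_mul]
    ring
  have htsq : t ^ 2 ≤ C ^ 2 * D := by
    have h1 : |t| ^ 2 ≤ (C * frobNorm (devPart σ)) ^ 2 :=
      pow_le_pow_left₀ (abs_nonneg t) htr 2
    rw [sq_abs, mul_pow, sq_frobNorm] at h1
    exact h1
  have hSle : S ≤ (1 + C ^ 2) * D := by
    have h2 : t ^ 2 / n ≤ t ^ 2 := by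
      apply div_le_self (sq_nonneg t)
      exact_mod_cast hn
    nlinarith
  have hkey : D / (2 * mu) ≤ frobInner (complianceA lam mu σ) σ := by
    rw [hAeq, hDeq]
    have h3 : lam / ((n : ℝ) * lam + 2 * mu) * t ^ 2 ≤ t ^ 2 / n := by
      rw [div_mul_eq_mul_div, div_le_div_iff₀ hden hn0]
      nlinarith [sq_nonneg t]
    have h5 : S - t ^ 2 / (n:ℝ) ≤ S - lam / ((n:ℝ) * lam + 2 * mu) * t ^ 2 := by linarith
    calc (S - t ^ 2 / (n:ℝ)) / (2 * mu)
        ≤ (S - lam / ((n:ℝ) * lam + 2 * mu) * t ^ 2) / (2 * mu) := by gcongr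
      _ = 1 / (2 * mu) * (S - lam / ((n:ℝ) * lam + 2 * mu) * t ^ 2) := by ring
  refine le_trans ?_ hkey
  rw [sq_frobNorm, ← hS]
  rcases le_total (C ^ 2) 1 with h | h
  · rw [min_eq_left (one_div_le_one_div_of_le (by positivity) (by nlinarith))]
    rw [div_mul_eq_mul_div, one_mul, div_le_div_iff₀ (by positivity) (by positivity)]
    nlinarith [mul_le_mul_of_nonneg_right hSle hmu.le, mul_nonneg hDnn hmu.le]
  · rw [min_eq_right (one_div_le_one_div_of_le (by positivity) (by nlinarith))]
    rw [div_mul_eq_mul_div, one_mul, div_le_div_iff₀ (by positivity) (by positivity)]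
    nlinarith [mul_le_mul_of_nonneg_right hSle hmu.le, mul_nonneg hDnn hmu.le,
      mul_nonneg (mul_nonneg hDnn hmu.le) (by linarith : (0:ℝ) ≤ C ^ 2 - 1)]
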